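/- Let p, q be nonzero coprime integers and let δ = gcd(A(p,q), B(p,q)) > 0. Then δ divides 2·3⁵·7·59. -/

import Mathlib

def A (p q : ℤ) : ℤ := 59*p^2 - 236*p*q - 7*q^2
def B (p q : ℤ) : ℤ := -118*p^2 - 14*p*q + 14*q^2

theorem stmt12 (p q : ℤ) (hp : p ≠ 0) (hq : q ≠ 0) (hcop : Int.gcd p q = 1) :
    (Int.gcd (A p q) (B p q) : ℤ) ∣ 2 * 3^5 * 7 * 59 := by
  set d : ℤ := (Int.gcd (A p q) (B p q) : ℤ) with hd
  have h1 : d ∣ A p q := Int.gcd_dvd_left (A p q) (B p q)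
  have h2 : d ∣ B p q := Int.gcd_dvd_right (A p q) (B p q)
  -- d divides 486 p q
  have h3 : d ∣ 486 * (p * q) := by
    have : 486 * (p * q) = -(2 * A p q + B p q) := by simp [A, B]; ring
    rw [this]
    exact dvd_neg.mpr (dvd_add (h1.mul_left 2) h2)
  -- d divides 7*486*q^3
  have h4 : d ∣ 3402 * q ^ 3 := by
    have : 3402 * q ^ 3 =
        (59 * p) * (486 * (p * q)) - (236 * q) * (486 * (p * q)) - 486 * q * A p q := by
      simp [A]; ring
    rw [this]
    exact dvd_sub (dvd_sub (h3.mul_left _) (h3.mul_left _)) (h1.mul_left _)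
  -- d divides 59*486*p^3
  have h5 : d ∣ 28674 * p ^ 3 := by
    have : 28674 * p ^ 3 =
        486 * p * A p q + (236 * p) * (486 * (p * q)) + (7 * q) * (486 * (p * q)) := by
      simp [A]; ring
    rw [this]
    exact dvd_add (dvd_add (h1.mul_left _) (h3.mul_left _)) (h3.mul_left _)
  have hc : IsCoprime p q := Int.isCoprime_iff_gcd_eq_one.mpr hcop
  have hc3 : IsCoprime (p ^ 3) (q ^ 3) := (hc.pow : _)
  obtain ⟨a, b, hab⟩ := hc3
  have key : (2 * 3 ^ 5 * 7 * 59 : ℤ) =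
      a * (7 * (28674 * p ^ 3)) + b * (59 * (3402 * q ^ 3)) := by
    have : (2 * 3 ^ 5 * 7 * 59 : ℤ) = 200718 * (a * p ^ 3 + b * q ^ 3) := by
      rw [hab]; ring
    rw [this]; ring
  rw [key]
  exact dvd_add ((h5.mul_left 7).mul_left a) ((h4.mul_left 59).mul_left b)
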